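/- arXiv:1210.2737 — 3 statements merged into one kernel-verified Lean document; each statement's English description precedes it below -/
import Mathlib

section
/- Let e : A0 →ι A1 →π A2 be an extension of C*-algebras. Define: j : S(C_π) → C(C_π) the inclusion; ev₁ : C(C_π) → C_π, u ↦ u(1); ω_incl : C_{Sπ} → C_{Cπ}, (a,h) ↦ (a,h) (induced by the inclusions SA1 ⊆ CA1 and SA2 ⊆ CA2); and ω_ev : C_{Cπ} → C_π, (a,h) ↦ (a(1), s ↦ (h(s))(1)) (induced by the evaluations ev₁ : CA1 → A1 and ev₁ : CA2 → A2). Then: (1) both sequences S(C_π) →j C(C_π) →ev₁ C_π and C_{Sπ} →ω_incl C_{Cπ} →ω_ev C_π are short exact; (2) Cflip ∘ j = ω_incl ∘ Sflip as maps S(C_π) → C_{Cπ}; and (3) ω_ev ∘ Cflip = ev₁ as maps C(C_π) → C_π. In other words, the flip isomorphisms, together with the identity on C_π, constitute an isomorphism from the canonical short exact sequence of extensions 0 → S(mc(e)) → C(mc(e)) → mc(e) → 0 onto 0 → mc(Se) → mc(Ce) → mc(e) → 0. -/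
/-!
Formalization preamble: cones, suspensions, mapping cones of (non-unital) C*-algebras,
their concrete models inside algebras of continuous functions, and functors from
C*-algebras to abelian groups.
-/

set_option maxHeartbeats 1600000
set_option synthInstance.maxHeartbeats 800000

open scoped unitInterval CStarAlgebra

noncomputable section

namespace CStarPaper

variable {A B : Type*} [NonUnitalCStarAlgebra A] [NonUnitalCStarAlgebra B]

/-- The flip of a continuous function on the square `[0,1]²`. -/
def flip2 {A : Type*} [NonUnitalCStarAlgebra A] (f : C(I × I, A)) : C(I × I, A) :=
  f.comp ⟨Prod.swap, continuous_swap⟩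

@[simp] lemma flip2_apply (f : C(I × I, A)) (s t : I) : flip2 f (s, t) = f (t, s) := rfl

/-- The cone `CA = {f ∈ C([0,1],A) : f(0) = 0}` of a C*-algebra `A`. -/
def cone (A : Type*) [NonUnitalCStarAlgebra A] : NonUnitalStarSubalgebra ℂ C(I, A) where
  carrier := {f | f 0 = 0}
  add_mem' := by intro f g hf hg; simp_all [Set.mem_setOf_eq]
  zero_mem' := by simp [Set.mem_setOf_eq]
  mul_mem' := by intro f g hf hg; simp_all [Set.mem_setOf_eq]
  smul_mem' := by intro c f hf; simp_all [Set.mem_setOf_eq]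
  star_mem' := by intro f hf; simp_all [Set.mem_setOf_eq, map_star]

instance cone.isClosed (A : Type*) [NonUnitalCStarAlgebra A] :
    IsClosed ((cone A : Set C(I, A))) :=
  isClosed_eq (continuous_eval_const 0) continuous_const

/-- The suspension `SA = {f ∈ C([0,1],A) : f(0) = f(1) = 0}` of a C*-algebra `A`. -/
def susp (A : Type*) [NonUnitalCStarAlgebra A] : NonUnitalStarSubalgebra ℂ C(I, A) where
  carrier := {f | f 0 = 0 ∧ f 1 = 0}
  add_mem' := by intro f g hf hg; simp_all [Set.mem_setOf_eq]
  zero_mem' := by simp [Set.mem_setOf_eq]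
  mul_mem' := by intro f g hf hg; simp_all [Set.mem_setOf_eq]
  smul_mem' := by intro c f hf; simp_all [Set.mem_setOf_eq]
  star_mem' := by intro f hf; simp_all [Set.mem_setOf_eq, map_star]

instance susp.isClosed (A : Type*) [NonUnitalCStarAlgebra A] :
    IsClosed ((susp A : Set C(I, A))) := by
  have h : (susp A : Set C(I, A)) = {f | f 0 = 0} ∩ {f | f 1 = 0} := rfl
  rw [h]
  exact (isClosed_eq (continuous_eval_const 0) continuous_const).inter
    (isClosed_eq (continuous_eval_const 1) continuous_const)

/-- The mapping cone `C_φ = {(x,y) ∈ A ⊕ CB : φ(x) = y(1)}` of `φ : A → B`. -/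
def mapCone (φ : A →⋆ₙₐ[ℂ] B) : NonUnitalStarSubalgebra ℂ (A × C(I, B)) where
  carrier := {p | p.2 0 = 0 ∧ φ p.1 = p.2 1}
  add_mem' := by intro p q hp hq; simp_all [Set.mem_setOf_eq]
  zero_mem' := by simp [Set.mem_setOf_eq]
  mul_mem' := by intro p q hp hq; simp_all [Set.mem_setOf_eq]
  smul_mem' := by intro c p hp; simp_all [Set.mem_setOf_eq]
  star_mem' := by intro p hp; simp_all [Set.mem_setOf_eq, map_star]

instance mapCone.isClosed (φ : A →⋆ₙₐ[ℂ] B) :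
    IsClosed ((mapCone φ : Set (A × C(I, B)))) := by
  have h : (mapCone φ : Set (A × C(I, B)))
      = {p : A × C(I, B) | p.2 0 = 0} ∩ {p : A × C(I, B) | φ p.1 = p.2 1} := rfl
  rw [h]
  exact (isClosed_eq ((continuous_eval_const 0).comp continuous_snd) continuous_const).inter
    (isClosed_eq ((map_continuous φ).comp continuous_fst)
      ((continuous_eval_const 1).comp continuous_snd))

/-- The canonical inclusion `SA → CA`. -/
def suspIncl (A : Type*) [NonUnitalCStarAlgebra A] : ↥(susp A) →⋆ₙₐ[ℂ] ↥(cone A) where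
  toFun f := ⟨(f : C(I, A)), f.2.1⟩
  map_smul' _ _ := rfl
  map_zero' := rfl
  map_add' _ _ := rfl
  map_mul' _ _ := rfl
  map_star' _ := rfl

/-- Evaluation at `1`, as a *-homomorphism `CA → A`. -/
def coneEval (A : Type*) [NonUnitalCStarAlgebra A] : ↥(cone A) →⋆ₙₐ[ℂ] A where
  toFun f := (f : C(I, A)) 1
  map_smul' _ _ := rfl
  map_zero' := rfl
  map_add' _ _ := rfl
  map_mul' _ _ := rfl
  map_star' _ := rfl

/-- The canonical projection `π_mc : C_φ → A`, `(x,y) ↦ x`. -/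
def mapConeProj (φ : A →⋆ₙₐ[ℂ] B) : ↥(mapCone φ) →⋆ₙₐ[ℂ] A where
  toFun p := (p : A × C(I, B)).1
  map_smul' _ _ := rfl
  map_zero' := rfl
  map_add' _ _ := rfl
  map_mul' _ _ := rfl
  map_star' _ := rfl

/-- The projection `C_φ → CB`, `(x,y) ↦ y`. -/
def mapConeSnd (φ : A →⋆ₙₐ[ℂ] B) : ↥(mapCone φ) →⋆ₙₐ[ℂ] ↥(cone B) where
  toFun p := ⟨(p : A × C(I, B)).2, p.2.1⟩
  map_smul' _ _ := rfl
  map_zero' := rfl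
  map_add' _ _ := rfl
  map_mul' _ _ := rfl
  map_star' _ := rfl

/-- The canonical inclusion `ι_mc : SB → C_φ`, `g ↦ (0,g)`. -/
def mapConeIncl (φ : A →⋆ₙₐ[ℂ] B) : ↥(susp B) →⋆ₙₐ[ℂ] ↥(mapCone φ) where
  toFun g := ⟨(0, (g : C(I, B))), ⟨g.2.1, by simp [g.2.2]⟩⟩
  map_smul' c g := Subtype.ext (by simp [Prod.ext_iff])
  map_zero' := Subtype.ext (by simp [Prod.ext_iff])
  map_add' g h := Subtype.ext (by simp [Prod.ext_iff])
  map_mul' g h := Subtype.ext (by simp [Prod.ext_iff])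
  map_star' g := Subtype.ext (by simp [Prod.ext_iff])

/-- The concrete model of the suspension `S(C_φ)` of a mapping cone, inside
`C([0,1],A) × C([0,1]²,B)`. -/
def suspMapConeModel (φ : A →⋆ₙₐ[ℂ] B) :
    NonUnitalStarSubalgebra ℂ (C(I, A) × C(I × I, B)) where
  carrier := {p | p.1 0 = 0 ∧ p.1 1 = 0 ∧ (∀ t, p.2 (0, t) = 0) ∧ (∀ t, p.2 (1, t) = 0) ∧
    (∀ s, p.2 (s, 0) = 0) ∧ ∀ s, φ (p.1 s) = p.2 (s, 1)}
  add_mem' := by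
    rintro p q ⟨h1, h2, h3, h4, h5, h6⟩ ⟨g1, g2, g3, g4, g5, g6⟩
    exact ⟨by simp [h1, g1], by simp [h2, g2], fun t => by simp [h3 t, g3 t],
      fun t => by simp [h4 t, g4 t], fun s => by simp [h5 s, g5 s],
      fun s => by simp [h6 s, g6 s]⟩
  zero_mem' := ⟨by simp, by simp, fun t => by simp, fun t => by simp, fun s => by simp,
    fun s => by simp⟩
  mul_mem' := by
    rintro p q ⟨h1, h2, h3, h4, h5, h6⟩ ⟨g1, g2, g3, g4, g5, g6⟩
    exact ⟨by simp [h1, g1], by simp [h2, g2], fun t => by simp [h3 t, g3 t],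
      fun t => by simp [h4 t, g4 t], fun s => by simp [h5 s, g5 s],
      fun s => by simp [h6 s, g6 s]⟩
  smul_mem' := by
    rintro c p ⟨h1, h2, h3, h4, h5, h6⟩
    exact ⟨by simp [h1], by simp [h2], fun t => by simp [h3 t],
      fun t => by simp [h4 t], fun s => by simp [h5 s], fun s => by simp [h6 s]⟩
  star_mem' := by
    rintro p ⟨h1, h2, h3, h4, h5, h6⟩
    exact ⟨by simp [h1], by simp [h2], fun t => by simp [h3 t],
      fun t => by simp [h4 t], fun s => by simp [h5 s], fun s => by simp [map_star, h6 s]⟩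

/-- The concrete model of the mapping cone `C_{Sφ}` of the suspension of `φ`, inside
`C([0,1],A) × C([0,1]²,B)`. -/
def mapConeSuspModel (φ : A →⋆ₙₐ[ℂ] B) :
    NonUnitalStarSubalgebra ℂ (C(I, A) × C(I × I, B)) where
  carrier := {p | p.1 0 = 0 ∧ p.1 1 = 0 ∧ (∀ t, p.2 (0, t) = 0) ∧ (∀ s, p.2 (s, 0) = 0) ∧
    (∀ s, p.2 (s, 1) = 0) ∧ ∀ t, φ (p.1 t) = p.2 (1, t)}
  add_mem' := by
    rintro p q ⟨h1, h2, h3, h4, h5, h6⟩ ⟨g1, g2, g3, g4, g5, g6⟩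
    exact ⟨by simp [h1, g1], by simp [h2, g2], fun t => by simp [h3 t, g3 t],
      fun s => by simp [h4 s, g4 s], fun s => by simp [h5 s, g5 s],
      fun t => by simp [h6 t, g6 t]⟩
  zero_mem' := ⟨by simp, by simp, fun t => by simp, fun s => by simp, fun s => by simp,
    fun t => by simp⟩
  mul_mem' := by
    rintro p q ⟨h1, h2, h3, h4, h5, h6⟩ ⟨g1, g2, g3, g4, g5, g6⟩
    exact ⟨by simp [h1, g1], by simp [h2, g2], fun t => by simp [h3 t, g3 t],
      fun s => by simp [h4 s, g4 s], fun s => by simp [h5 s, g5 s],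
      fun t => by simp [h6 t, g6 t]⟩
  smul_mem' := by
    rintro c p ⟨h1, h2, h3, h4, h5, h6⟩
    exact ⟨by simp [h1], by simp [h2], fun t => by simp [h3 t],
      fun s => by simp [h4 s], fun s => by simp [h5 s], fun t => by simp [h6 t]⟩
  star_mem' := by
    rintro p ⟨h1, h2, h3, h4, h5, h6⟩
    exact ⟨by simp [h1], by simp [h2], fun t => by simp [h3 t],
      fun s => by simp [h4 s], fun s => by simp [h5 s], fun t => by simp [map_star, h6 t]⟩

/-- The concrete model of the cone `C(C_φ)` of a mapping cone, inside
`C([0,1],A) × C([0,1]²,B)`. -/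
def coneMapConeModel (φ : A →⋆ₙₐ[ℂ] B) :
    NonUnitalStarSubalgebra ℂ (C(I, A) × C(I × I, B)) where
  carrier := {p | p.1 0 = 0 ∧ (∀ t, p.2 (0, t) = 0) ∧ (∀ s, p.2 (s, 0) = 0) ∧
    ∀ s, φ (p.1 s) = p.2 (s, 1)}
  add_mem' := by
    rintro p q ⟨h1, h3, h5, h6⟩ ⟨g1, g3, g5, g6⟩
    exact ⟨by simp [h1, g1], fun t => by simp [h3 t, g3 t], fun s => by simp [h5 s, g5 s],
      fun s => by simp [h6 s, g6 s]⟩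
  zero_mem' := ⟨by simp, fun t => by simp, fun s => by simp, fun s => by simp⟩
  mul_mem' := by
    rintro p q ⟨h1, h3, h5, h6⟩ ⟨g1, g3, g5, g6⟩
    exact ⟨by simp [h1, g1], fun t => by simp [h3 t, g3 t], fun s => by simp [h5 s, g5 s],
      fun s => by simp [h6 s, g6 s]⟩
  smul_mem' := by
    rintro c p ⟨h1, h3, h5, h6⟩
    exact ⟨by simp [h1], fun t => by simp [h3 t], fun s => by simp [h5 s],
      fun s => by simp [h6 s]⟩
  star_mem' := by
    rintro p ⟨h1, h3, h5, h6⟩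
    exact ⟨by simp [h1], fun t => by simp [h3 t], fun s => by simp [h5 s],
      fun s => by simp [map_star, h6 s]⟩

/-- The concrete model of the mapping cone `C_{Cφ}` of the cone of `φ`, inside
`C([0,1],A) × C([0,1]²,B)`. -/
def mapConeConeModel (φ : A →⋆ₙₐ[ℂ] B) :
    NonUnitalStarSubalgebra ℂ (C(I, A) × C(I × I, B)) where
  carrier := {p | p.1 0 = 0 ∧ (∀ t, p.2 (0, t) = 0) ∧ (∀ s, p.2 (s, 0) = 0) ∧
    ∀ t, φ (p.1 t) = p.2 (1, t)}
  add_mem' := by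
    rintro p q ⟨h1, h3, h5, h6⟩ ⟨g1, g3, g5, g6⟩
    exact ⟨by simp [h1, g1], fun t => by simp [h3 t, g3 t], fun s => by simp [h5 s, g5 s],
      fun t => by simp [h6 t, g6 t]⟩
  zero_mem' := ⟨by simp, fun t => by simp, fun s => by simp, fun t => by simp⟩
  mul_mem' := by
    rintro p q ⟨h1, h3, h5, h6⟩ ⟨g1, g3, g5, g6⟩
    exact ⟨by simp [h1, g1], fun t => by simp [h3 t, g3 t], fun s => by simp [h5 s, g5 s],
      fun t => by simp [h6 t, g6 t]⟩
  smul_mem' := by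
    rintro c p ⟨h1, h3, h5, h6⟩
    exact ⟨by simp [h1], fun t => by simp [h3 t], fun s => by simp [h5 s],
      fun t => by simp [h6 t]⟩
  star_mem' := by
    rintro p ⟨h1, h3, h5, h6⟩
    exact ⟨by simp [h1], fun t => by simp [h3 t], fun s => by simp [h5 s],
      fun t => by simp [map_star, h6 t]⟩

variable {X Y₁ Y₂ Z : Type*} [NonUnitalCStarAlgebra X] [NonUnitalCStarAlgebra Y₁]
  [NonUnitalCStarAlgebra Y₂] [NonUnitalCStarAlgebra Z]

/-- The canonical concrete realization of the double mapping cone associated to a commuting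
square `ψ₁ ∘ φ₁ = ψ₂ ∘ φ₂`, inside `X × C([0,1],Y₁) × C([0,1],Y₂) × C([0,1]²,Z)`. -/
def dblCone (φ₁ : X →⋆ₙₐ[ℂ] Y₁) (φ₂ : X →⋆ₙₐ[ℂ] Y₂) (ψ₁ : Y₁ →⋆ₙₐ[ℂ] Z) (ψ₂ : Y₂ →⋆ₙₐ[ℂ] Z) :
    NonUnitalStarSubalgebra ℂ (X × C(I, Y₁) × C(I, Y₂) × C(I × I, Z)) where
  carrier := {p | p.2.1 0 = 0 ∧ p.2.2.1 0 = 0 ∧ (∀ t, p.2.2.2 (0, t) = 0) ∧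
    (∀ s, p.2.2.2 (s, 0) = 0) ∧ φ₁ p.1 = p.2.1 1 ∧ φ₂ p.1 = p.2.2.1 1 ∧
    (∀ t, ψ₁ (p.2.1 t) = p.2.2.2 (1, t)) ∧ ∀ s, ψ₂ (p.2.2.1 s) = p.2.2.2 (s, 1)}
  add_mem' := by
    rintro p q ⟨h1, h2, h3, h4, h5, h6, h7, h8⟩ ⟨g1, g2, g3, g4, g5, g6, g7, g8⟩
    exact ⟨by simp [h1, g1], by simp [h2, g2], fun t => by simp [h3 t, g3 t],
      fun s => by simp [h4 s, g4 s], by simp [h5, g5], by simp [h6, g6],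
      fun t => by simp [h7 t, g7 t], fun s => by simp [h8 s, g8 s]⟩
  zero_mem' := ⟨by simp, by simp, fun t => by simp, fun s => by simp, by simp, by simp,
    fun t => by simp, fun s => by simp⟩
  mul_mem' := by
    rintro p q ⟨h1, h2, h3, h4, h5, h6, h7, h8⟩ ⟨g1, g2, g3, g4, g5, g6, g7, g8⟩
    exact ⟨by simp [h1, g1], by simp [h2, g2], fun t => by simp [h3 t, g3 t],
      fun s => by simp [h4 s, g4 s], by simp [h5, g5], by simp [h6, g6],
      fun t => by simp [h7 t, g7 t], fun s => by simp [h8 s, g8 s]⟩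
  smul_mem' := by
    rintro c p ⟨h1, h2, h3, h4, h5, h6, h7, h8⟩
    exact ⟨by simp [h1], by simp [h2], fun t => by simp [h3 t], fun s => by simp [h4 s],
      by simp [h5], by simp [h6], fun t => by simp [h7 t], fun s => by simp [h8 s]⟩
  star_mem' := by
    rintro p ⟨h1, h2, h3, h4, h5, h6, h7, h8⟩
    exact ⟨by simp [h1], by simp [h2], fun t => by simp [h3 t], fun s => by simp [h4 s],
      by simp [map_star, h5], by simp [map_star, h6], fun t => by simp [map_star, h7 t],
      fun s => by simp [map_star, h8 s]⟩

/-- The pullback of two *-homomorphisms with common codomain, as a *-subalgebra of the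
direct sum. -/
def pullbackAlg {B₂ C₁ C₂ : Type*} [NonUnitalCStarAlgebra B₂] [NonUnitalCStarAlgebra C₁]
    [NonUnitalCStarAlgebra C₂] (v : B₂ →⋆ₙₐ[ℂ] C₂) (w : C₁ →⋆ₙₐ[ℂ] C₂) :
    NonUnitalStarSubalgebra ℂ (B₂ × C₁) where
  carrier := {p | v p.1 = w p.2}
  add_mem' := by intro p q hp hq; simp_all [Set.mem_setOf_eq]
  zero_mem' := by simp [Set.mem_setOf_eq]
  mul_mem' := by intro p q hp hq; simp_all [Set.mem_setOf_eq]
  smul_mem' := by intro c p hp; simp_all [Set.mem_setOf_eq]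
  star_mem' := by intro p hp; simp_all [Set.mem_setOf_eq, map_star]

/-- `ι, π` form a short exact sequence. -/
def IsShortExact {A₀ A₁ A₂ : Type*}
    [NonUnitalNonAssocSemiring A₀] [NonUnitalNonAssocSemiring A₁] [NonUnitalNonAssocSemiring A₂]
    [DistribMulAction ℂ A₀] [DistribMulAction ℂ A₁] [DistribMulAction ℂ A₂]
    [Star A₀] [Star A₁] [Star A₂]
    (ι : A₀ →⋆ₙₐ[ℂ] A₁) (π : A₁ →⋆ₙₐ[ℂ] A₂) : Prop :=
  Function.Injective ι ∧ Function.Surjective π ∧ Set.range ι = {b | π b = 0}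


/-- The canonical short exact sequence `0 → S(mc(e)) → C(mc(e)) → mc(e) → 0`
is isomorphic, via the flip isomorphisms and the identity on `C_π`, to
`0 → mc(Se) → mc(Ce) → mc(e) → 0`. -/
theorem statement1
    {A₀ A₁ A₂ : Type*}
    [NonUnitalCStarAlgebra A₀] [NonUnitalCStarAlgebra A₁] [NonUnitalCStarAlgebra A₂]
    (ι : A₀ →⋆ₙₐ[ℂ] A₁) (π : A₁ →⋆ₙₐ[ℂ] A₂) (he : IsShortExact ι π)
    -- the inclusion `j : S(C_π) → C(C_π)`
    (j : ↥(suspMapConeModel π) →⋆ₙₐ[ℂ] ↥(coneMapConeModel π))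
    (hj : ∀ p, (j p).val = p.val)
    -- evaluation at 1, `ev₁ : C(C_π) → C_π`
    (ev₁ : ↥(coneMapConeModel π) →⋆ₙₐ[ℂ] ↥(mapCone π))
    (hev₁ : ∀ u, (ev₁ u).val.1 = u.val.1 1 ∧ ∀ t, (ev₁ u).val.2 t = u.val.2 (1, t))
    -- the inclusion `ω_incl : C_{Sπ} → C_{Cπ}`
    (ωincl : ↥(mapConeSuspModel π) →⋆ₙₐ[ℂ] ↥(mapConeConeModel π))
    (hωincl : ∀ p, (ωincl p).val = p.val)
    -- the evaluation `ω_ev : C_{Cπ} → C_π`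
    (ωev : ↥(mapConeConeModel π) →⋆ₙₐ[ℂ] ↥(mapCone π))
    (hωev : ∀ p, (ωev p).val.1 = p.val.1 1 ∧ ∀ s, (ωev p).val.2 s = p.val.2 (s, 1))
    -- the two flip isomorphisms
    (sflip : ↥(suspMapConeModel π) →⋆ₙₐ[ℂ] ↥(mapConeSuspModel π))
    (hsflip : ∀ p, (sflip p).val = (p.val.1, flip2 p.val.2))
    (cflip : ↥(coneMapConeModel π) →⋆ₙₐ[ℂ] ↥(mapConeConeModel π))
    (hcflip : ∀ p, (cflip p).val = (p.val.1, flip2 p.val.2)) :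
    -- (1) both sequences are short exact
    IsShortExact j ev₁ ∧ IsShortExact ωincl ωev ∧
    -- (2) the flips intertwine the inclusions
    (∀ p, cflip (j p) = ωincl (sflip p)) ∧
    -- (3) the flips intertwine the evaluations
    ∀ u, ωev (cflip u) = ev₁ u := by
  refine ⟨⟨?_, ?_, ?_⟩, ⟨?_, ?_, ?_⟩, ?_, ?_⟩
  · -- j injective
    intro p q h
    exact Subtype.ext (by rw [← hj p, ← hj q, h])
  · -- ev₁ surjective
    rintro ⟨⟨x, y⟩, hy⟩
    obtain ⟨hy0, hy1⟩ := hy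
    have cf1 : Continuous fun s : I => ((s : ℝ) : ℂ) • x :=
      (Complex.continuous_ofReal.comp continuous_subtype_val).smul continuous_const
    have cf2 : Continuous fun st : I × I => ((st.1 : ℝ) : ℂ) • y st.2 :=
      ((Complex.continuous_ofReal.comp continuous_subtype_val).comp continuous_fst).smul
        (y.continuous.comp continuous_snd)
    have hmem : ((⟨_, cf1⟩ : C(I, A₁)), (⟨_, cf2⟩ : C(I × I, A₂))) ∈ coneMapConeModel π := by
      refine ⟨by simp, fun t => by simp, fun s => ?_, fun s => ?_⟩
      · simp [hy0]
      · simp only [ContinuousMap.coe_mk, map_smul]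
        exact congrArg _ hy1
    refine ⟨⟨_, hmem⟩, Subtype.ext (Prod.ext ?_ ?_)⟩
    · rw [(hev₁ ⟨_, hmem⟩).1]; simp
    · ext t
      rw [(hev₁ ⟨_, hmem⟩).2 t]; simp
  · -- range j = ker ev₁
    ext b
    constructor
    · rintro ⟨p, rfl⟩
      obtain ⟨h1, h2, h3, h4, h5, h6⟩ := p.2
      refine Subtype.ext (Prod.ext ?_ ?_)
      · rw [(hev₁ (j p)).1, hj]
        simpa using h2
      · ext t
        rw [(hev₁ (j p)).2 t, hj]
        simpa using h4 t
    · intro hb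
      have h0 : (ev₁ b).val = 0 := by rw [hb]; rfl
      obtain ⟨k1, k2, k3, k4⟩ := b.2
      have hb1 : b.val.1 1 = 0 := by rw [← (hev₁ b).1, h0]; simp
      have hb2 : ∀ t, b.val.2 (1, t) = 0 := fun t => by
        rw [← (hev₁ b).2 t, h0]; rfl
      exact ⟨⟨b.val, ⟨k1, hb1, k2, hb2, k3, k4⟩⟩, Subtype.ext (hj _)⟩
  · -- ωincl injective
    intro p q h
    exact Subtype.ext (by rw [← hωincl p, ← hωincl q, h])
  · -- ωev surjective
    rintro ⟨⟨x, y⟩, hy⟩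
    obtain ⟨hy0, hy1⟩ := hy
    have cf1 : Continuous fun t : I => ((t : ℝ) : ℂ) • x :=
      (Complex.continuous_ofReal.comp continuous_subtype_val).smul continuous_const
    have cf2 : Continuous fun st : I × I => ((st.2 : ℝ) : ℂ) • y st.1 :=
      ((Complex.continuous_ofReal.comp continuous_subtype_val).comp continuous_snd).smul
        (y.continuous.comp continuous_fst)
    have hmem : ((⟨_, cf1⟩ : C(I, A₁)), (⟨_, cf2⟩ : C(I × I, A₂))) ∈ mapConeConeModel π := by
      refine ⟨by simp, fun t => ?_, fun s => by simp, fun t => ?_⟩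
      · simp [hy0]
      · simp only [ContinuousMap.coe_mk, map_smul]
        exact congrArg _ hy1
    refine ⟨⟨_, hmem⟩, Subtype.ext (Prod.ext ?_ ?_)⟩
    · rw [(hωev ⟨_, hmem⟩).1]; simp
    · ext s
      rw [(hωev ⟨_, hmem⟩).2 s]; simp
  · -- range ωincl = ker ωev
    ext b
    constructor
    · rintro ⟨p, rfl⟩
      obtain ⟨h1, h2, h3, h4, h5, h6⟩ := p.2
      refine Subtype.ext (Prod.ext ?_ ?_)
      · rw [(hωev (ωincl p)).1, hωincl]
        simpa using h2
      · ext s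
        rw [(hωev (ωincl p)).2 s, hωincl]
        simpa using h5 s
    · intro hb
      have h0 : (ωev b).val = 0 := by rw [hb]; rfl
      obtain ⟨k1, k2, k3, k4⟩ := b.2
      have hb1 : b.val.1 1 = 0 := by rw [← (hωev b).1, h0]; simp
      have hb2 : ∀ s, b.val.2 (s, 1) = 0 := fun s => by
        rw [← (hωev b).2 s, h0]; rfl
      exact ⟨⟨b.val, ⟨k1, hb1, k2, k3, hb2, k4⟩⟩, Subtype.ext (hωincl _)⟩
  · -- (2)
    intro p
    refine Subtype.ext ?_
    rw [hcflip, hj, hωincl, hsflip]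
  · -- (3)
    intro u
    refine Subtype.ext (Prod.ext ?_ ?_)
    · rw [(hωev (cflip u)).1, hcflip, (hev₁ u).1]
    · ext s
      rw [(hωev (cflip u)).2 s, hcflip, (hev₁ u).2 s]
      rfl

end CStarPaper
end
end

section
/- The isomorphism ξ_y : C_{mc(y)} ≅ mc(C_y): Assume a 3×3 diagram (row form) of C*-algebras with exact rows A_i →x_i B_i →y_i C_i (i = 0,1,2) and exact columns A0 →ι_A A1 →π_A A2, B0 →ι_B B1 →π_B B2, C0 →ι_C C1 →π_C C2, all squares commuting. Set Q := {(x, f2, f1, h) ∈ B1 ⊕ CB2 ⊕ CC1 ⊕ C([0,1]²,C2) : h(0,·) = 0, h(·,0) = 0, π_B(x) = f2(1), y1(x) = f1(1), y2(f2(t)) = h(1,t), π_C(f1(s)) = h(s,1)} (the canonical realization of the double mapping cone C_{C_{π_B}→C_{π_C}}) and Q′ := {(x, f1, f2, h) ∈ B1 ⊕ CC1 ⊕ CB2 ⊕ C([0,1]²,C2) : h(0,·) = 0, h(·,0) = 0, y1(x) = f1(1), π_B(x) = f2(1), π_C(f1(s)) = h(1,s), y2(f2(t)) = h(t,1)} (the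 canonical realization of C_{C_{y1}→C_{y2}}). Then: (1) the map Ξ : Q → Q′, (x, f2, f1, h) ↦ (x, f1, f2, flip(h)), is a *-isomorphism; (2) the sequences C_{Sy2} →((f2,h) ↦ (0,f2,0,h)) Q →((x,f2,f1,h) ↦ (x,f1)) C_{y1} and S(C_{y2}) →((f2,h) ↦ (0,0,f2,h)) Q′ →((x,f1,f2,h) ↦ (x,f1)) C_{y1} are short exact, where C_{Sy2} = {(f2,h) ∈ SB2 ⊕ C([0,1]²,C2) : h(0,·) = 0, h(·,0) = h(·,1) = 0, y2(f2(t)) = h(1,t)} and S(C_{y2}) = {(f2,h) ∈ SB2 ⊕ C([0,1]²,C2) : h(0,·) = h(1,·) = 0, h(·,0) = 0, y2(f2(s)) = h(s,1)}; and (3) Ξ restricts on the ideals to the S-flip (f2,h) ↦ (f2, flip(h)) : C_{Sy2} → S(C_{y2}) and induces the identity on the common quotient C_{y1}. Thus Ξ is an isomorphism of extensions from C_{mc(y)} onto mc(C_y). -/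
/-!
Formalization preamble: cones, suspensions, mapping cones of (non-unital) C*-algebras,
their concrete models inside algebras of continuous functions, and functors from
C*-algebras to abelian groups.
-/

set_option maxHeartbeats 1600000
set_option synthInstance.maxHeartbeats 800000

open scoped unitInterval CStarAlgebra

noncomputable section

namespace CStarPaper

variable {A B : Type*} [NonUnitalCStarAlgebra A] [NonUnitalCStarAlgebra B]

variable {X Y₁ Y₂ Z : Type*} [NonUnitalCStarAlgebra X] [NonUnitalCStarAlgebra Y₁]
  [NonUnitalCStarAlgebra Y₂] [NonUnitalCStarAlgebra Z]

section Aux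

variable {B₁ B₂ C₁ C₂ : Type*} [NonUnitalCStarAlgebra B₁] [NonUnitalCStarAlgebra B₂]
  [NonUnitalCStarAlgebra C₁] [NonUnitalCStarAlgebra C₂]
  (u : B₁ →⋆ₙₐ[ℂ] B₂) (v : B₁ →⋆ₙₐ[ℂ] C₁) (w : B₂ →⋆ₙₐ[ℂ] C₂) (z : C₁ →⋆ₙₐ[ℂ] C₂)

/-- The flip isomorphism between the two double mapping cones. -/
def auxXi : ↥(dblCone u v w z) ≃⋆ₐ[ℂ] ↥(dblCone v u z w) where
  toFun q := ⟨(q.1.1, q.1.2.2.1, q.1.2.1, flip2 q.1.2.2.2), by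
    obtain ⟨h1, h2, h3, h4, h5, h6, h7, h8⟩ := q.2
    exact ⟨h2, h1, fun t => h4 t, fun s => h3 s, h6, h5, fun t => h8 t, fun s => h7 s⟩⟩
  invFun q := ⟨(q.1.1, q.1.2.2.1, q.1.2.1, flip2 q.1.2.2.2), by
    obtain ⟨h1, h2, h3, h4, h5, h6, h7, h8⟩ := q.2
    exact ⟨h2, h1, fun t => h4 t, fun s => h3 s, h6, h5, fun t => h8 t, fun s => h7 s⟩⟩
  left_inv q := rfl
  right_inv q := rfl
  map_mul' _ _ := rfl
  map_add' _ _ := rfl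
  map_smul' _ _ := rfl
  map_star' _ := rfl

/-- Inclusion `C_{Sy₂} → Q`. -/
def auxIota1 : ↥(mapConeSuspModel w) →⋆ₙₐ[ℂ] ↥(dblCone u v w z) where
  toFun g := ⟨(0, g.1.1, 0, g.1.2), by
    obtain ⟨h1, h2, h3, h4, h5, h6⟩ := g.2
    exact ⟨h1, rfl, fun t => h3 t, fun s => h4 s, by simp [h2], by simp,
      fun t => h6 t, fun s => by simp [h5 s]⟩⟩
  map_smul' c g := Subtype.ext (by simp [Prod.ext_iff])
  map_zero' := Subtype.ext (by simp [Prod.ext_iff])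
  map_add' g h := Subtype.ext (by simp [Prod.ext_iff])
  map_mul' g h := Subtype.ext (by simp [Prod.ext_iff])
  map_star' g := Subtype.ext (by simp [Prod.ext_iff])

/-- Projection `Q → C_{y₁}`. -/
def auxPi1 : ↥(dblCone u v w z) →⋆ₙₐ[ℂ] ↥(mapCone v) where
  toFun q := ⟨(q.1.1, q.1.2.2.1), q.2.2.1, q.2.2.2.2.2.2.1⟩
  map_smul' _ _ := rfl
  map_zero' := rfl
  map_add' _ _ := rfl
  map_mul' _ _ := rfl
  map_star' _ := rfl

/-- Inclusion `S(C_{y₂}) → Q'`. -/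
def auxIota2 : ↥(suspMapConeModel w) →⋆ₙₐ[ℂ] ↥(dblCone v u z w) where
  toFun g := ⟨(0, 0, g.1.1, g.1.2), by
    obtain ⟨h1, h2, h3, h4, h5, h6⟩ := g.2
    exact ⟨rfl, h1, fun t => h3 t, fun s => h5 s, by simp, by simp [h2],
      fun t => by simp [h4 t], fun s => h6 s⟩⟩
  map_smul' c g := Subtype.ext (by simp [Prod.ext_iff])
  map_zero' := Subtype.ext (by simp [Prod.ext_iff])
  map_add' g h := Subtype.ext (by simp [Prod.ext_iff])
  map_mul' g h := Subtype.ext (by simp [Prod.ext_iff])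
  map_star' g := Subtype.ext (by simp [Prod.ext_iff])

/-- Projection `Q' → C_{y₁}`. -/
def auxPi2 : ↥(dblCone v u z w) →⋆ₙₐ[ℂ] ↥(mapCone v) where
  toFun q := ⟨(q.1.1, q.1.2.1), q.2.1, q.2.2.2.2.2.1⟩
  map_smul' _ _ := rfl
  map_zero' := rfl
  map_add' _ _ := rfl
  map_mul' _ _ := rfl
  map_star' _ := rfl

/-- The S-flip `C_{Sy₂} → S(C_{y₂})`. -/
def auxSFlip : ↥(mapConeSuspModel w) →⋆ₙₐ[ℂ] ↥(suspMapConeModel w) where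
  toFun g := ⟨(g.1.1, flip2 g.1.2), by
    obtain ⟨h1, h2, h3, h4, h5, h6⟩ := g.2
    exact ⟨h1, h2, fun t => h4 t, fun t => h5 t, fun s => h3 s, fun s => h6 s⟩⟩
  map_smul' _ _ := rfl
  map_zero' := rfl
  map_add' _ _ := rfl
  map_mul' _ _ := rfl
  map_star' _ := rfl

lemma auxExact1 (sq : ∀ b, w (u b) = z (v b)) :
    IsShortExact (auxIota1 u v w z) (auxPi1 u v w z) := by
  refine ⟨?_, ?_, ?_⟩
  · intro a b hab
    have h := congrArg Subtype.val hab
    exact Subtype.ext (Prod.ext (congrArg (fun p => p.2.1) h) (congrArg (fun p => p.2.2.2) h))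
  · intro m
    obtain ⟨hm0, hm1⟩ := m.2
    refine ⟨⟨(m.1.1,
      ⟨fun t => ((t : ℝ) : ℂ) • u m.1.1, by fun_prop⟩,
      m.1.2,
      ⟨fun p => ((p.2 : ℝ) : ℂ) • z (m.1.2 p.1), by fun_prop⟩), ?_⟩, ?_⟩
    · refine ⟨by simp, hm0, fun t => ?_, fun s => ?_, by simp, hm1, fun t => ?_, fun s => ?_⟩
      · show ((t : ℝ) : ℂ) • z (m.1.2 0) = 0
        simp [hm0]
      · show ((0 : ℝ) : ℂ) • z (m.1.2 s) = 0
        simp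
      · show w (((t : ℝ) : ℂ) • u m.1.1) = ((t : ℝ) : ℂ) • z (m.1.2 1)
        rw [map_smul, sq, hm1]
      · show z (m.1.2 s) = ((1 : ℝ) : ℂ) • z (m.1.2 s)
        simp
    · exact Subtype.ext rfl
  · ext q
    simp only [Set.mem_range, Set.mem_setOf_eq]
    constructor
    · rintro ⟨g, rfl⟩
      exact Subtype.ext rfl
    · intro hq
      have h := congrArg Subtype.val hq
      have hx : q.1.1 = 0 := congrArg Prod.fst h
      have hf : q.1.2.2.1 = 0 := congrArg Prod.snd h
      obtain ⟨h1, h2, h3, h4, h5, h6, h7, h8⟩ := q.2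
      refine ⟨⟨(q.1.2.1, q.1.2.2.2), ⟨h1, ?_, h3, h4, ?_, h7⟩⟩, ?_⟩
      · rw [← h5, hx, map_zero]
      · intro s
        rw [← h8 s, hf]
        simp
      · apply Subtype.ext
        show (0, q.1.2.1, 0, q.1.2.2.2) = q.1
        rw [← hx, ← hf]

lemma auxExact2 (sq : ∀ b, w (u b) = z (v b)) :
    IsShortExact (auxIota2 u v w z) (auxPi2 u v w z) := by
  refine ⟨?_, ?_, ?_⟩
  · intro a b hab
    have h := congrArg Subtype.val hab
    exact Subtype.ext (Prod.ext (congrArg (fun p => p.2.2.1) h) (congrArg (fun p => p.2.2.2) h))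
  · intro m
    obtain ⟨hm0, hm1⟩ := m.2
    refine ⟨⟨(m.1.1,
      m.1.2,
      ⟨fun s => ((s : ℝ) : ℂ) • u m.1.1, by fun_prop⟩,
      ⟨fun p => ((p.1 : ℝ) : ℂ) • z (m.1.2 p.2), by fun_prop⟩), ?_⟩, ?_⟩
    · refine ⟨hm0, by simp, fun t => ?_, fun s => ?_, hm1, by simp, fun t => ?_, fun s => ?_⟩
      · show ((0 : ℝ) : ℂ) • z (m.1.2 t) = 0
        simp
      · show ((s : ℝ) : ℂ) • z (m.1.2 0) = 0
        simp [hm0]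
      · show z (m.1.2 t) = ((1 : ℝ) : ℂ) • z (m.1.2 t)
        simp
      · show w (((s : ℝ) : ℂ) • u m.1.1) = ((s : ℝ) : ℂ) • z (m.1.2 1)
        rw [map_smul, sq, hm1]
    · exact Subtype.ext rfl
  · ext q
    simp only [Set.mem_range, Set.mem_setOf_eq]
    constructor
    · rintro ⟨g, rfl⟩
      exact Subtype.ext rfl
    · intro hq
      have h := congrArg Subtype.val hq
      have hx : q.1.1 = 0 := congrArg Prod.fst h
      have hf : q.1.2.1 = 0 := congrArg Prod.snd h
      obtain ⟨h1, h2, h3, h4, h5, h6, h7, h8⟩ := q.2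
      refine ⟨⟨(q.1.2.2.1, q.1.2.2.2), ⟨h2, ?_, h3, ?_, h4, h8⟩⟩, ?_⟩
      · rw [← h6, hx, map_zero]
      · intro t
        rw [← h7 t, hf]
        simp
      · apply Subtype.ext
        show (0, 0, q.1.2.2.1, q.1.2.2.2) = q.1
        rw [← hx, ← hf]

end Aux

/-- The isomorphism `ξ_y : C_{mc(y)} ≅ mc(C_y)` for a 3×3 diagram. -/
theorem statement4
    {A₀ A₁ A₂ B₀ B₁ B₂ C₀ C₁ C₂ : Type*}
    [NonUnitalCStarAlgebra A₀] [NonUnitalCStarAlgebra A₁] [NonUnitalCStarAlgebra A₂]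
    [NonUnitalCStarAlgebra B₀] [NonUnitalCStarAlgebra B₁] [NonUnitalCStarAlgebra B₂]
    [NonUnitalCStarAlgebra C₀] [NonUnitalCStarAlgebra C₁] [NonUnitalCStarAlgebra C₂]
    -- exact rows
    (x₀ : A₀ →⋆ₙₐ[ℂ] B₀) (y₀ : B₀ →⋆ₙₐ[ℂ] C₀) (hr₀ : IsShortExact x₀ y₀)
    (x₁ : A₁ →⋆ₙₐ[ℂ] B₁) (y₁ : B₁ →⋆ₙₐ[ℂ] C₁) (hr₁ : IsShortExact x₁ y₁)
    (x₂ : A₂ →⋆ₙₐ[ℂ] B₂) (y₂ : B₂ →⋆ₙₐ[ℂ] C₂) (hr₂ : IsShortExact x₂ y₂)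
    -- exact columns
    (ιA : A₀ →⋆ₙₐ[ℂ] A₁) (πA : A₁ →⋆ₙₐ[ℂ] A₂) (hcA : IsShortExact ιA πA)
    (ιB : B₀ →⋆ₙₐ[ℂ] B₁) (πB : B₁ →⋆ₙₐ[ℂ] B₂) (hcB : IsShortExact ιB πB)
    (ιC : C₀ →⋆ₙₐ[ℂ] C₁) (πC : C₁ →⋆ₙₐ[ℂ] C₂) (hcC : IsShortExact ιC πC)
    -- commuting squares
    (hsq₁ : ∀ p, x₁ (ιA p) = ιB (x₀ p)) (hsq₂ : ∀ p, x₂ (πA p) = πB (x₁ p))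
    (hsq₃ : ∀ p, y₁ (ιB p) = ιC (y₀ p)) (hsq₄ : ∀ p, y₂ (πB p) = πC (y₁ p)) :
    -- with `Q = dblCone πB y₁ y₂ πC` the canonical realization of `C_{C_{π_B} → C_{π_C}}`
    -- and `Q' = dblCone y₁ πB πC y₂` the canonical realization of `C_{C_{y₁} → C_{y₂}}`:
    ∃ (Ξ : ↥(dblCone πB y₁ y₂ πC) ≃⋆ₐ[ℂ] ↥(dblCone y₁ πB πC y₂))
      (ι₁ : ↥(mapConeSuspModel y₂) →⋆ₙₐ[ℂ] ↥(dblCone πB y₁ y₂ πC))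
      (π₁ : ↥(dblCone πB y₁ y₂ πC) →⋆ₙₐ[ℂ] ↥(mapCone y₁))
      (ι₂ : ↥(suspMapConeModel y₂) →⋆ₙₐ[ℂ] ↥(dblCone y₁ πB πC y₂))
      (π₂ : ↥(dblCone y₁ πB πC y₂) →⋆ₙₐ[ℂ] ↥(mapCone y₁))
      (sflip : ↥(mapConeSuspModel y₂) →⋆ₙₐ[ℂ] ↥(suspMapConeModel y₂)),
      -- (1) `Ξ : (x, f₂, f₁, h) ↦ (x, f₁, f₂, flip h)` is a *-isomorphism `Q ≅ Q'`
      (∀ q, (Ξ q).val = (q.val.1, q.val.2.2.1, q.val.2.1, flip2 q.val.2.2.2)) ∧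
      -- the canonical maps of the two sequences
      (∀ w, (ι₁ w).val = (0, w.val.1, 0, w.val.2)) ∧
      (∀ q, (π₁ q).val = (q.val.1, q.val.2.2.1)) ∧
      (∀ w, (ι₂ w).val = (0, 0, w.val.1, w.val.2)) ∧
      (∀ q, (π₂ q).val = (q.val.1, q.val.2.1)) ∧
      -- the S-flip `C_{Sy₂} → S(C_{y₂})`
      (∀ w, (sflip w).val = (w.val.1, flip2 w.val.2)) ∧
      -- (2) both sequences are short exact
      IsShortExact ι₁ π₁ ∧ IsShortExact ι₂ π₂ ∧
      -- (3) `Ξ` restricts to the S-flip on the ideals and to the identity on the quotient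
      (∀ w, Ξ (ι₁ w) = ι₂ (sflip w)) ∧ ∀ q, π₂ (Ξ q) = π₁ q := by
  refine ⟨auxXi πB y₁ y₂ πC, auxIota1 πB y₁ y₂ πC, auxPi1 πB y₁ y₂ πC,
    auxIota2 πB y₁ y₂ πC, auxPi2 πB y₁ y₂ πC, auxSFlip y₂,
    fun q => rfl, fun g => rfl, fun q => rfl, fun g => rfl, fun q => rfl, fun g => rfl,
    auxExact1 πB y₁ y₂ πC hsq₄, auxExact2 πB y₁ y₂ πC hsq₄,
    fun g => Subtype.ext rfl, fun q => rfl⟩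

end CStarPaper
end
end

section
/- Exactness of the mapping cone functor on short exact sequences of extensions: Assume a 3×3 diagram (row form) of C*-algebras with exact rows A_i →x_i B_i →y_i C_i (i = 0,1,2) and exact columns A0 →ι_A A1 →π_A A2, B0 →ι_B B1 →π_B B2, C0 →ι_C C1 →π_C C2, all squares commuting. Then the induced *-homomorphisms on mapping cones ω_x : C_{π_A} → C_{π_B}, (a, h) ↦ (x_1(a), x_2∘h), and ω_y : C_{π_B} → C_{π_C}, (b, h) ↦ (y_1(b), y_2∘h), form a short exact sequence: ω_x is injective, ω_y is surjective, and range ω_x = ker ω_y. -/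
/-!
Formalization preamble: cones, suspensions, mapping cones of (non-unital) C*-algebras,
their concrete models inside algebras of continuous functions, and functors from
C*-algebras to abelian groups.
-/

set_option maxHeartbeats 1600000
set_option synthInstance.maxHeartbeats 800000

open scoped unitInterval CStarAlgebra

noncomputable section

namespace CStarPaper

variable {A B : Type*} [NonUnitalCStarAlgebra A] [NonUnitalCStarAlgebra B]

variable {X Y₁ Y₂ Z : Type*} [NonUnitalCStarAlgebra X] [NonUnitalCStarAlgebra Y₁]
  [NonUnitalCStarAlgebra Y₂] [NonUnitalCStarAlgebra Z]

section Lifting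

variable {E F : Type*} [NonUnitalCStarAlgebra E] [NonUnitalCStarAlgebra F]

lemma quasi_abs_le {a : F} {x : ℝ} (hx : x ∈ quasispectrum ℝ a) : |x| ≤ ‖a‖ := by
  rw [Unitization.quasispectrum_eq_spectrum_inr' ℝ ℂ] at hx
  simpa [Unitization.norm_inr] using spectrum.norm_le_norm_of_mem hx

lemma lift_sa (π : E →⋆ₙₐ[ℂ] F) (hπ : Function.Surjective π) (a : F) (ha : IsSelfAdjoint a) :
    ∃ b : E, π b = a ∧ ‖b‖ ≤ ‖a‖ := by
  obtain ⟨b₀, hb₀⟩ := hπ a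
  set b₁ : E := (2⁻¹ : ℂ) • (b₀ + star b₀) with hb₁def
  have hb₁sa : IsSelfAdjoint b₁ := by
    have : ((starRingEnd ℂ) (2⁻¹ : ℂ)) = 2⁻¹ := by simp [Complex.conj_ofNat]
    rw [IsSelfAdjoint, hb₁def, star_smul, star_add, star_star, RCLike.star_def, this, add_comm]
  have hπb₁ : π b₁ = a := by
    rw [hb₁def, map_smul, map_add, map_star, hb₀, ha.star_eq, ← two_smul ℂ a, smul_smul]
    norm_num
  set f : ℝ → ℝ := fun t => max (-‖a‖) (min ‖a‖ t) with hfdef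
  have hf : Continuous f := continuous_const.max (continuous_const.min continuous_id)
  have hf0 : f 0 = 0 := by
    simp [hfdef, min_eq_right (norm_nonneg a), max_eq_right (neg_nonpos.mpr (norm_nonneg a))]
  refine ⟨cfcₙ f b₁, ?_, ?_⟩
  · have hmap : π (cfcₙ f b₁) = cfcₙ f (π b₁) :=
      NonUnitalStarAlgHomClass.map_cfcₙ π f b₁ (hf.continuousOn) hf0 (map_continuous π) hb₁sa
        (hπb₁ ▸ ha)
    rw [hmap, hπb₁]
    have : cfcₙ f a = cfcₙ (id : ℝ → ℝ) a := by
      refine cfcₙ_congr fun x hx => ?_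
      have := quasi_abs_le hx
      rw [abs_le] at this
      simp [hfdef, min_eq_right this.2, max_eq_right (by linarith [this.1, this.2] : -‖a‖ ≤ x)]
    rw [this, cfcₙ_id ℝ a]
  · refine norm_cfcₙ_le fun x _ => ?_
    rw [Real.norm_eq_abs, abs_le]
    constructor
    · exact le_max_left _ _
    · exact max_le (by linarith [norm_nonneg a]) (min_le_left _ _)

lemma lift_norm (π : E →⋆ₙₐ[ℂ] F) (hπ : Function.Surjective π) (c : F) :
    ∃ b : E, π b = c ∧ ‖b‖ ≤ 2 * ‖c‖ := by
  set c₁ : F := (2⁻¹ : ℂ) • (c + star c) with hc₁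
  set c₂ : F := (-(Complex.I) * 2⁻¹) • (c - star c) with hc₂
  have hc₁sa : IsSelfAdjoint c₁ := by
    have : ((starRingEnd ℂ) (2⁻¹ : ℂ)) = 2⁻¹ := by simp [Complex.conj_ofNat]
    rw [IsSelfAdjoint, hc₁, star_smul, star_add, star_star, RCLike.star_def, this, add_comm]
  have hc₂sa : IsSelfAdjoint c₂ := by
    have : ((starRingEnd ℂ) (-(Complex.I) * 2⁻¹)) = Complex.I * 2⁻¹ := by
      simp [Complex.conj_ofNat]
    rw [IsSelfAdjoint, hc₂, star_smul, star_sub, star_star, RCLike.star_def, this]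
    rw [show (Complex.I * 2⁻¹) • (star c - c) = (-(Complex.I) * 2⁻¹) • (c - star c) by
      rw [neg_mul, neg_smul, ← smul_neg, neg_sub]]
  have hc₁n : ‖c₁‖ ≤ ‖c‖ := by
    calc ‖c₁‖ ≤ ‖(2⁻¹ : ℂ)‖ * (‖c‖ + ‖star c‖) := by
          rw [hc₁, norm_smul]
          exact mul_le_mul_of_nonneg_left (norm_add_le _ _) (norm_nonneg _)
      _ = ‖c‖ := by rw [norm_star]; simp; ring
  have hc₂n : ‖c₂‖ ≤ ‖c‖ := by
    calc ‖c₂‖ ≤ ‖(-(Complex.I) * 2⁻¹ : ℂ)‖ * (‖c‖ + ‖star c‖) := by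
          rw [hc₂, norm_smul]
          exact mul_le_mul_of_nonneg_left (norm_sub_le _ _) (norm_nonneg _)
      _ = ‖c‖ := by rw [norm_star]; simp [norm_mul]; ring
  obtain ⟨b₁, hb₁, hb₁n⟩ := lift_sa π hπ c₁ hc₁sa
  obtain ⟨b₂, hb₂, hb₂n⟩ := lift_sa π hπ c₂ hc₂sa
  refine ⟨b₁ + Complex.I • b₂, ?_, ?_⟩
  · rw [map_add, map_smul, hb₁, hb₂, hc₁, hc₂, smul_smul]
    have : Complex.I * (-(Complex.I) * 2⁻¹) = 2⁻¹ := by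
      rw [← mul_assoc, mul_neg, Complex.I_mul_I]; norm_num
    rw [this, ← smul_add]
    have : c + star c + (c - star c) = (2 : ℂ) • c := by rw [two_smul]; abel
    rw [this, smul_smul]; norm_num
  · calc ‖b₁ + Complex.I • b₂‖ ≤ ‖b₁‖ + ‖Complex.I • b₂‖ := norm_add_le _ _
      _ = ‖b₁‖ + ‖b₂‖ := by rw [norm_smul, Complex.norm_I, one_mul]
      _ ≤ 2 * ‖c‖ := by linarith [hb₁n.trans hc₁n, hb₂n.trans hc₂n]

lemma approx_lift (π : E →⋆ₙₐ[ℂ] F) (hπ : Function.Surjective π) (h : C(I, F)) :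
    ∃ k : C(I, E), ‖k‖ ≤ 2 * ‖h‖ ∧ ∀ s, ‖h s - π (k s)‖ ≤ ‖h‖ / 2 := by
  by_cases hz : h = 0
  · exact ⟨0, by simp [hz], fun s => by simp [hz]⟩
  have hpos : 0 < ‖h‖ := norm_pos_iff.mpr hz
  set ε : ℝ := ‖h‖ / 2 with hε
  have hεpos : 0 < ε := by positivity
  set U : I → Set I := fun t => {s | ‖h s - h t‖ < ε} with hU
  have hUopen : ∀ t, IsOpen (U t) := fun t =>
    isOpen_lt (Continuous.norm ((map_continuous h).sub continuous_const)) continuous_const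
  have hUcov : (Set.univ : Set I) ⊆ ⋃ t, U t := fun s _ =>
    Set.mem_iUnion.mpr ⟨s, by simp [hU, hεpos]⟩
  obtain ⟨T, hT⟩ := isCompact_univ.elim_finite_subcover U hUopen hUcov
  set g : I → I → ℝ := fun t s => max 0 (ε - ‖h s - h t‖) with hg
  have hgcont : ∀ t, Continuous (fun s => g t s) := fun t =>
    continuous_const.max (continuous_const.sub
      (Continuous.norm ((map_continuous h).sub continuous_const)))
  have hgnonneg : ∀ t s, 0 ≤ g t s := fun t s => le_max_left _ _
  set S : I → ℝ := fun s => ∑ t ∈ T, g t s with hS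
  have hScont : Continuous S := continuous_finset_sum _ fun t _ => hgcont t
  have hSpos : ∀ s, 0 < S s := by
    intro s
    obtain ⟨t, ht, hst⟩ := Set.mem_iUnion₂.mp (hT (Set.mem_univ s))
    refine Finset.sum_pos' (fun t _ => hgnonneg t s) ⟨t, ht, ?_⟩
    simp only [hg]
    have : ‖h s - h t‖ < ε := hst
    exact lt_max_of_lt_right (by linarith)
  have hbf : ∀ t : I, ∃ b : E, π b = h t ∧ ‖b‖ ≤ 2 * ‖h t‖ := fun t => lift_norm π hπ (h t)
  choose bf hbf1 hbf2 using hbf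
  set w : I → I → ℝ := fun t s => g t s / S s with hw
  have hwcont : ∀ t, Continuous (fun s => w t s) := fun t =>
    (hgcont t).div hScont fun s => (hSpos s).ne'
  have hwnonneg : ∀ t s, 0 ≤ w t s := fun t s => div_nonneg (hgnonneg t s) (hSpos s).le
  have hwsum : ∀ s, ∑ t ∈ T, w t s = 1 := fun s => by
    rw [hw, ← Finset.sum_div]
    exact div_self (hSpos s).ne'
  set k : C(I, E) := ⟨fun s => ∑ t ∈ T, ((w t s : ℝ) : ℂ) • bf t,
    continuous_finset_sum _ fun t _ =>
      ((Complex.continuous_ofReal.comp (hwcont t)).smul continuous_const)⟩ with hk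
  have hks : ∀ s, π (k s) = ∑ t ∈ T, ((w t s : ℝ) : ℂ) • h t := by
    intro s
    rw [hk, ContinuousMap.coe_mk, map_sum]
    exact Finset.sum_congr rfl fun t _ => by rw [map_smul, hbf1]
  refine ⟨k, ?_, ?_⟩
  · rw [ContinuousMap.norm_le _ (by positivity)]
    intro s
    calc ‖k s‖ ≤ ∑ t ∈ T, ‖((w t s : ℝ) : ℂ) • bf t‖ := norm_sum_le _ _
      _ ≤ ∑ t ∈ T, w t s * (2 * ‖h‖) := by
          refine Finset.sum_le_sum fun t _ => ?_
          rw [norm_smul, Complex.norm_real, Real.norm_eq_abs, abs_of_nonneg (hwnonneg t s)]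
          exact mul_le_mul_of_nonneg_left ((hbf2 t).trans (by
            have := ContinuousMap.norm_coe_le_norm h t
            linarith)) (hwnonneg t s)
      _ = 2 * ‖h‖ := by rw [← Finset.sum_mul, hwsum, one_mul]
  · intro s
    have hsum1 : (∑ t ∈ T, ((w t s : ℝ) : ℂ)) = 1 := by
      rw [← Complex.ofReal_sum, hwsum s, Complex.ofReal_one]
    have key : h s - π (k s) = ∑ t ∈ T, ((w t s : ℝ) : ℂ) • (h s - h t) :=
      calc h s - π (k s)
          = (∑ t ∈ T, ((w t s : ℝ) : ℂ)) • h s - ∑ t ∈ T, ((w t s : ℝ) : ℂ) • h t := by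
            rw [hks s, hsum1, one_smul]
        _ = ∑ t ∈ T, (((w t s : ℝ) : ℂ) • h s - ((w t s : ℝ) : ℂ) • h t) := by
            rw [Finset.sum_sub_distrib, Finset.sum_smul]
        _ = ∑ t ∈ T, ((w t s : ℝ) : ℂ) • (h s - h t) :=
            Finset.sum_congr rfl fun t _ => (smul_sub _ _ _).symm
    rw [key]
    calc ‖∑ t ∈ T, ((w t s : ℝ) : ℂ) • (h s - h t)‖
        ≤ ∑ t ∈ T, ‖((w t s : ℝ) : ℂ) • (h s - h t)‖ := norm_sum_le _ _
      _ ≤ ∑ t ∈ T, w t s * ε := by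
          refine Finset.sum_le_sum fun t _ => ?_
          rw [norm_smul, Complex.norm_real, Real.norm_eq_abs, abs_of_nonneg (hwnonneg t s)]
          rcases eq_or_lt_of_le (hwnonneg t s) with h0 | hpos'
          · rw [← h0]; simp
          · refine mul_le_mul_of_nonneg_left ?_ (hwnonneg t s)
            have hgp : 0 < g t s := by
              rcases div_pos_iff.mp hpos' with ⟨h1, _⟩ | ⟨_, h2⟩
              · exact h1
              · linarith [hSpos s]
            have hlt : 0 < ε - ‖h s - h t‖ :=
              (lt_max_iff.mp hgp).resolve_left (lt_irrefl 0)
            linarith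
      _ = ε := by rw [← Finset.sum_mul, hwsum, one_mul]

lemma surj_comp (π : E →⋆ₙₐ[ℂ] F) (hπ : Function.Surjective π) (h : C(I, F)) :
    ∃ k : C(I, E), ∀ s, π (k s) = h s := by
  set Φ : C(I, E) → C(I, F) :=
    fun k => ⟨fun s => π (k s), (map_continuous π).comp k.continuous⟩ with hΦ
  have hΦadd : ∀ k k', Φ (k + k') = Φ k + Φ k' := fun k k' =>
    ContinuousMap.ext fun s => by simp [hΦ]
  set Φhom : C(I, E) →+ C(I, F) := AddMonoidHom.mk' Φ hΦadd with hΦhom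
  have hΦnorm : ∀ k, ‖Φhom k‖ ≤ 1 * ‖k‖ := by
    intro k
    rw [one_mul, ContinuousMap.norm_le _ (norm_nonneg k)]
    exact fun s => (NonUnitalStarAlgHom.norm_apply_le π (k s)).trans
      (ContinuousMap.norm_coe_le_norm k s)
  have hΦcont : Continuous Φhom := AddMonoidHomClass.continuous_of_bound Φhom 1 hΦnorm
  choose u hu1 hu2 using approx_lift π hπ
  set hseq : ℕ → C(I, F) := fun n => Nat.rec h (fun _ p => p - Φ (u p)) n with hseqdef
  have hseq_succ : ∀ n, hseq (n + 1) = hseq n - Φ (u (hseq n)) := fun n => rfl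
  have hnorm : ∀ n, ‖hseq n‖ ≤ ‖h‖ * (2⁻¹ : ℝ) ^ n := by
    intro n
    induction n with
    | zero => simp [hseqdef]
    | succ n ih =>
        have step : ‖hseq (n + 1)‖ ≤ ‖hseq n‖ / 2 := by
          rw [hseq_succ n, ContinuousMap.norm_le _ (by positivity)]
          intro s
          simpa [hΦ] using hu2 (hseq n) s
        calc ‖hseq (n+1)‖ ≤ ‖hseq n‖ / 2 := step
          _ ≤ (‖h‖ * (2⁻¹:ℝ) ^ n) / 2 := by linarith
          _ = ‖h‖ * (2⁻¹:ℝ) ^ (n+1) := by ring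
  set kseq : ℕ → C(I, E) := fun n => u (hseq n) with hkseq
  have hksumm : Summable kseq := by
    refine Summable.of_norm_bounded (g := fun n => (2 * ‖h‖) * (2⁻¹:ℝ) ^ n)
      ((summable_geometric_of_lt_one (by norm_num) (by norm_num)).mul_left _) fun n => ?_
    calc ‖kseq n‖ ≤ 2 * ‖hseq n‖ := hu1 (hseq n)
      _ ≤ 2 * (‖h‖ * (2⁻¹:ℝ) ^ n) := by linarith [hnorm n]
      _ = (2 * ‖h‖) * (2⁻¹:ℝ) ^ n := by ring
  set k : C(I, E) := ∑' n, kseq n with hk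
  have hΦsum : HasSum (fun n => Φhom (kseq n)) (Φhom k) := hksumm.hasSum.map Φhom hΦcont
  have hpart : ∀ n, ∑ i ∈ Finset.range n, Φhom (kseq i) = h - hseq n := by
    intro n
    induction n with
    | zero => simp [hseqdef]
    | succ n ih =>
        rw [Finset.sum_range_succ, ih, hseq_succ n]
        have : Φhom (kseq n) = Φ (u (hseq n)) := rfl
        rw [this]
        abel
  have hseq0 : Filter.Tendsto hseq Filter.atTop (nhds 0) := by
    rw [tendsto_zero_iff_norm_tendsto_zero]
    refine squeeze_zero (fun n => norm_nonneg _) hnorm ?_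
    have := (tendsto_pow_atTop_nhds_zero_of_lt_one (by norm_num : (0:ℝ) ≤ 2⁻¹)
      (by norm_num : (2⁻¹:ℝ) < 1)).const_mul ‖h‖
    simpa using this
  have htend : Filter.Tendsto (fun n => ∑ i ∈ Finset.range n, Φhom (kseq i))
      Filter.atTop (nhds h) := by
    simp_rw [hpart]
    have := Filter.Tendsto.sub (tendsto_const_nhds (x := h) (f := Filter.atTop (α := ℕ))) hseq0
    simpa using this
  have : Φhom k = h := tendsto_nhds_unique hΦsum.tendsto_sum_nat htend
  exact ⟨k, fun s => DFunLike.congr_fun this s⟩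

end Lifting

/-- The mapping cone functor sends short exact sequences of extensions to
short exact sequences. -/
theorem statement15 {A₀ A₁ A₂ B₀ B₁ B₂ C₀ C₁ C₂ : Type*}
    [NonUnitalCStarAlgebra A₀] [NonUnitalCStarAlgebra A₁] [NonUnitalCStarAlgebra A₂]
    [NonUnitalCStarAlgebra B₀] [NonUnitalCStarAlgebra B₁] [NonUnitalCStarAlgebra B₂]
    [NonUnitalCStarAlgebra C₀] [NonUnitalCStarAlgebra C₁] [NonUnitalCStarAlgebra C₂]
    -- exact rows
    (x₀ : A₀ →⋆ₙₐ[ℂ] B₀) (y₀ : B₀ →⋆ₙₐ[ℂ] C₀) (hr₀ : IsShortExact x₀ y₀)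
    (x₁ : A₁ →⋆ₙₐ[ℂ] B₁) (y₁ : B₁ →⋆ₙₐ[ℂ] C₁) (hr₁ : IsShortExact x₁ y₁)
    (x₂ : A₂ →⋆ₙₐ[ℂ] B₂) (y₂ : B₂ →⋆ₙₐ[ℂ] C₂) (hr₂ : IsShortExact x₂ y₂)
    -- exact columns
    (ιA : A₀ →⋆ₙₐ[ℂ] A₁) (πA : A₁ →⋆ₙₐ[ℂ] A₂) (hcA : IsShortExact ιA πA)
    (ιB : B₀ →⋆ₙₐ[ℂ] B₁) (πB : B₁ →⋆ₙₐ[ℂ] B₂) (hcB : IsShortExact ιB πB)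
    (ιC : C₀ →⋆ₙₐ[ℂ] C₁) (πC : C₁ →⋆ₙₐ[ℂ] C₂) (hcC : IsShortExact ιC πC)
    -- commuting squares
    (hsq₁ : ∀ p, x₁ (ιA p) = ιB (x₀ p)) (hsq₂ : ∀ p, x₂ (πA p) = πB (x₁ p))
    (hsq₃ : ∀ p, y₁ (ιB p) = ιC (y₀ p)) (hsq₄ : ∀ p, y₂ (πB p) = πC (y₁ p))
    -- the induced *-homomorphisms on the mapping cones of the columns
    (ωx : ↥(mapCone πA) →⋆ₙₐ[ℂ] ↥(mapCone πB))
    (hωx : ∀ p : ↥(mapCone πA), (ωx p).val.1 = x₁ p.val.1 ∧ ∀ t, (ωx p).val.2 t = x₂ (p.val.2 t))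
    (ωy : ↥(mapCone πB) →⋆ₙₐ[ℂ] ↥(mapCone πC))
    (hωy : ∀ p : ↥(mapCone πB), (ωy p).val.1 = y₁ p.val.1 ∧ ∀ t, (ωy p).val.2 t = y₂ (p.val.2 t)) :
    Function.Injective ωx ∧ Function.Surjective ωy ∧
    Set.range ωx = {p | ωy p = 0} := by
  obtain ⟨hx₁inj, hy₁surj, hr₁ex⟩ := hr₁
  obtain ⟨hx₂inj, hy₂surj, hr₂ex⟩ := hr₂
  refine ⟨?_, ?_, ?_⟩
  · -- injectivity of ωx
    intro p q hpq
    have hv : (ωx p).val = (ωx q).val := congrArg Subtype.val hpq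
    apply Subtype.ext
    apply Prod.ext
    · apply hx₁inj
      rw [← (hωx p).1, ← (hωx q).1, hv]
    · apply ContinuousMap.ext
      intro t
      apply hx₂inj
      rw [← (hωx p).2 t, ← (hωx q).2 t, hv]
  · -- surjectivity of ωy
    intro q
    obtain ⟨hq0, hq1⟩ : q.val.2 0 = 0 ∧ πC q.val.1 = q.val.2 1 := q.2
    obtain ⟨k₀, hk₀⟩ := surj_comp y₂ hy₂surj q.val.2
    set k : C(I, B₂) := k₀ - ContinuousMap.const I (k₀ 0) with hkdef
    have hky : ∀ s, y₂ (k s) = q.val.2 s := by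
      intro s
      have : k s = k₀ s - k₀ 0 := rfl
      rw [this, map_sub, hk₀ s, hk₀ 0, hq0, sub_zero]
    have hk0 : k 0 = 0 := by
      have : k 0 = k₀ 0 - k₀ 0 := rfl
      rw [this, sub_self]
    obtain ⟨b, hb⟩ := hcB.2.1 (k 1)
    have hker : πC (q.val.1 - y₁ b) = 0 := by
      rw [map_sub, ← hsq₄, hb, hky 1, hq1, sub_self]
    have : q.val.1 - y₁ b ∈ Set.range ιC := by
      rw [hcC.2.2]; exact hker
    obtain ⟨c₀, hc₀⟩ := this
    obtain ⟨b₀, hb₀⟩ := hr₀.2.1 c₀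
    set b₁ : B₁ := b + ιB b₀ with hb₁def
    have hπBb₁ : πB b₁ = k 1 := by
      have hmem : ιB b₀ ∈ {x | πB x = 0} := by
        rw [← hcB.2.2]; exact Set.mem_range_self b₀
      rw [hb₁def, map_add, hmem, add_zero, hb]
    have hy₁b₁ : y₁ b₁ = q.val.1 := by
      rw [hb₁def, map_add, hsq₃, hb₀, hc₀]
      abel
    refine ⟨⟨(b₁, k), ⟨hk0, hπBb₁⟩⟩, ?_⟩
    apply Subtype.ext
    apply Prod.ext
    · rw [(hωy _).1]; exact hy₁b₁
    · apply ContinuousMap.ext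
      intro t
      rw [(hωy _).2 t]
      exact hky t
  · -- exactness in the middle
    ext p
    simp only [Set.mem_range, Set.mem_setOf_eq]
    constructor
    · rintro ⟨r, rfl⟩
      apply Subtype.ext
      apply Prod.ext
      · rw [(hωy _).1, (hωx r).1]
        have : x₁ r.val.1 ∈ {b | y₁ b = 0} := by
          rw [← hr₁ex]; exact Set.mem_range_self _
        exact this
      · apply ContinuousMap.ext
        intro t
        rw [(hωy _).2 t, (hωx r).2 t]
        have : x₂ (r.val.2 t) ∈ {b | y₂ b = 0} := by
          rw [← hr₂ex]; exact Set.mem_range_self _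
        exact this
    · intro hp
      have hv : (ωy p).val = 0 := by rw [hp]; rfl
      have hb0 : y₁ p.val.1 = 0 := by
        rw [← (hωy p).1, hv]; rfl
      have hk0 : ∀ t, y₂ (p.val.2 t) = 0 := by
        intro t
        rw [← (hωy p).2 t, hv]; rfl
      have : p.val.1 ∈ Set.range x₁ := by rw [hr₁ex]; exact hb0
      obtain ⟨a, ha⟩ := this
      have hmem : ∀ t, p.val.2 t ∈ Set.range x₂ := fun t => by
        rw [hr₂ex]; exact hk0 t
      choose af haf using hmem
      have hiso : Isometry x₂ := NonUnitalStarAlgHom.isometry x₂ hx₂inj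
      have hafc : Continuous af := by
        rw [hiso.isEmbedding.continuous_iff]
        have : (⇑x₂ ∘ af) = fun t => p.val.2 t := funext fun t => haf t
        rw [this]
        exact (map_continuous p.val.2)
      set aC : C(I, A₂) := ⟨af, hafc⟩ with haC
      obtain ⟨hp0, hp1⟩ : p.val.2 0 = 0 ∧ πB p.val.1 = p.val.2 1 := p.2
      have ha0 : aC 0 = 0 := by
        apply hx₂inj
        rw [map_zero x₂]
        exact (haf 0).trans hp0
      have ha1 : πA a = aC 1 := by
        apply hx₂inj
        rw [hsq₂, ha, hp1]
        exact (haf 1).symm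
      refine ⟨⟨(a, aC), ⟨ha0, ha1⟩⟩, ?_⟩
      apply Subtype.ext
      apply Prod.ext
      · rw [(hωx _).1]; exact ha
      · apply ContinuousMap.ext
        intro t
        rw [(hωx _).2 t]
        exact haf t


end CStarPaper
end
end
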